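/- Let A be an n×n matrix over a field K, π a permutation of {1, …, n}, and for each i let F̄_i(A) = F_i(A) − I (the matrix whose only possibly nonzero row is row i, equal to row i of A − I). Then for every 1 ≤ m ≤ n, the sum over all strictly decreasing index tuples n ≥ k_m > k_{m−1} > ⋯ > k_1 ≥ 1 of the products F̄_{π_{k_m}}(A)·F̄_{π_{k_{m−1}}}(A)⋯F̄_{π_{k_1}}(A) equals A_π^{m−1}·(A − I). -/

import Mathlib

open Matrix Finset

/-- `sdsF A i` is the matrix that agrees with the identity matrix in every row except
row `i`, whose `i`-th row equals the `i`-th row of `A`. -/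
def sdsF {K : Type*} [Field K] {n : ℕ} (A : Matrix (Fin n) (Fin n) K) (i : Fin n) :
    Matrix (Fin n) (Fin n) K :=
  Matrix.of fun k j => if k = i then A k j else if k = j then 1 else 0

/-- `permPart A π` is the matrix `A_π` with `[A_π]_{ij} = a_{ij}` if `i` appears strictly
after `j` in `π` (i.e. `π⁻¹ i > π⁻¹ j`) and `0` otherwise. -/
def permPart {K : Type*} [Field K] {n : ℕ} (A : Matrix (Fin n) (Fin n) K)
    (π : Equiv.Perm (Fin n)) : Matrix (Fin n) (Fin n) K :=
  Matrix.of fun i j => if π.symm j < π.symm i then A i j else 0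

set_option linter.unusedVariables false

section aux
variable {K : Type*} [Field K] {n : ℕ}

def Pm (K : Type*) [Field K] {n : ℕ} (π : Equiv.Perm (Fin n)) (k : Fin n) :
    Matrix (Fin n) (Fin n) K :=
  Matrix.single (π k) (π k) 1

lemma sdsF_sub_one (A : Matrix (Fin n) (Fin n) K) (π : Equiv.Perm (Fin n)) (k : Fin n) :
    sdsF A (π k) - 1 = Pm K π k * (A - 1) := by
  ext x y
  by_cases h : x = π k <;>
    simp [sdsF, Pm, Matrix.mul_apply, Matrix.single, Matrix.one_apply, h, eq_comm]

lemma sum_Pm (π : Equiv.Perm (Fin n)) : ∑ k, Pm K π k = 1 := by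
  ext x y
  rw [Matrix.sum_apply]
  simp only [Pm, Matrix.single, Matrix.of_apply]
  rw [Finset.sum_eq_single (π.symm x)]
  · simp [Matrix.one_apply]
  · intro l _ hl
    have : ¬ π l = x := fun h => hl (by rw [← h]; simp)
    simp [this]
  · simp

lemma Pm_mul (π : Equiv.Perm (Fin n)) (l : Fin n) (M : Matrix (Fin n) (Fin n) K) :
    Pm K π l * M = Matrix.of fun x y => if x = π l then M (π l) y else 0 := by
  ext x y
  by_cases h : x = π l <;> simp [Pm, Matrix.mul_apply, Matrix.single, h, eq_comm]

lemma mul_Pm (π : Equiv.Perm (Fin n)) (k : Fin n) (M : Matrix (Fin n) (Fin n) K) :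
    M * Pm K π k = Matrix.of fun x y => if y = π k then M x (π k) else 0 := by
  ext x y
  by_cases h : y = π k <;> simp [Pm, Matrix.mul_apply, Matrix.single, h, eq_comm]

lemma key1 (A : Matrix (Fin n) (Fin n) K) (π : Equiv.Perm (Fin n)) (k : Fin n) :
    (∑ l, if k < l then Pm K π l * (A - 1) * Pm K π k else 0) = permPart A π * Pm K π k := by
  ext x y
  rw [Matrix.sum_apply]
  simp only [Pm_mul, mul_Pm, Matrix.of_apply]
  by_cases hy : y = π k
  · rw [Finset.sum_eq_single (π.symm x)]
    · by_cases hx : k < π.symm x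
      · simp only [hx, if_true, hy, Equiv.apply_symm_apply, if_pos rfl, permPart,
          Matrix.of_apply, Matrix.sub_apply, Matrix.one_apply, Equiv.symm_apply_apply]
        have hne : ¬ x = π k := fun h => absurd (by rw [h]; simp) (ne_of_gt hx)
        simp [hne]
      · simp [hx, hy, permPart]
    · intro l _ hl
      by_cases hkl : k < l
      · simp only [hkl, if_true]
        have : ¬ x = π l := fun h => hl (by rw [h]; simp)
        simp [this]
      · simp [hkl]
    · simp
  · simp only [hy, if_false, Matrix.zero_apply, permPart, Matrix.of_apply]
    rw [Finset.sum_eq_zero fun l _ => by split <;> simp [hy]]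
end aux

section chain
variable {K : Type*} [Field K] {n : ℕ}

def chainSum (B : Fin n → Matrix (Fin n) (Fin n) K) (m c : ℕ) :
    Matrix (Fin n) (Fin n) K :=
  ∑ t : Fin m → Fin n,
    if (∀ p q : Fin m, p < q → t p < t q) ∧ (∀ i, c ≤ (t i : ℕ)) then
      (((List.finRange m).reverse).map fun i => B (t i)).prod
    else 0

lemma chainSum_zero (B : Fin n → Matrix (Fin n) (Fin n) K) (c : ℕ) :
    chainSum B 0 c = 1 := by
  simp [chainSum]

lemma prodCons (B : Fin n → Matrix (Fin n) (Fin n) K) {m : ℕ} (k : Fin n)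
    (t' : Fin m → Fin n) :
    (((List.finRange (m+1)).reverse).map fun i => B ((Fin.cons k t' : Fin (m+1) → Fin n) i)).prod
      = ((((List.finRange m).reverse).map fun i => B (t' i)).prod) * B k := by
  rw [List.finRange_succ]
  simp [List.map_reverse, Function.comp_def, List.map_map]

lemma condCons {m c : ℕ} (k : Fin n) (t' : Fin m → Fin n) :
    ((∀ p q : Fin (m+1), p < q → (Fin.cons k t' : Fin (m+1) → Fin n) p < (Fin.cons k t' : Fin (m+1) → Fin n) q)
        ∧ (∀ i, c ≤ (((Fin.cons k t' : Fin (m+1) → Fin n)) i : ℕ)))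
      ↔ (c ≤ (k : ℕ)) ∧ ((∀ p q : Fin m, p < q → t' p < t' q)
        ∧ (∀ i, (k : ℕ) + 1 ≤ (t' i : ℕ))) := by
  constructor
  · rintro ⟨h1, h2⟩
    refine ⟨by simpa using h2 0, fun p q hpq => ?_, fun i => ?_⟩
    · have h := h1 p.succ q.succ (by simpa using hpq)
      simp only [Fin.cons_succ] at h
      exact h
    · have h := h1 0 i.succ (Fin.succ_pos i)
      simp only [Fin.cons_zero, Fin.cons_succ] at h
      exact Nat.succ_le_of_lt h
  · rintro ⟨h0, h1, h2⟩
    refine ⟨fun p q hpq => ?_, fun i => ?_⟩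
    · induction q using Fin.cases with
      | zero => exact absurd hpq (by simp)
      | succ q' =>
        induction p using Fin.cases with
        | zero =>
          simp only [Fin.cons_zero, Fin.cons_succ]
          exact Fin.lt_iff_val_lt_val.mpr (Nat.lt_of_succ_le (h2 q'))
        | succ p' =>
          simp only [Fin.cons_succ]
          exact h1 p' q' (by simpa using hpq)
    · induction i using Fin.cases with
      | zero => simpa using h0
      | succ i' =>
        simp only [Fin.cons_succ]
        exact le_trans h0 (le_trans (Nat.le_succ _) (h2 i'))

lemma chainSum_succ (B : Fin n → Matrix (Fin n) (Fin n) K) (m c : ℕ) :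
    chainSum B (m+1) c
      = ∑ k : Fin n, if c ≤ (k : ℕ) then chainSum B m ((k : ℕ)+1) * B k else 0 := by
  rw [chainSum, ← Equiv.sum_comp (Fin.consEquiv fun _ => Fin n)]
  rw [Fintype.sum_prod_type]
  refine Finset.sum_congr rfl fun k _ => ?_
  by_cases hc : c ≤ (k : ℕ)
  · simp only [hc, if_true, chainSum, Finset.sum_mul]
    refine Finset.sum_congr rfl fun t' _ => ?_
    rw [show ((Fin.consEquiv fun _ => Fin n) (k, t')) = Fin.cons k t' from rfl]
    rw [if_congr (condCons k t') rfl rfl, prodCons]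
    simp [hc, ite_mul]
  · simp only [hc, if_false]
    refine Finset.sum_eq_zero fun t' _ => ?_
    rw [show ((Fin.consEquiv fun _ => Fin n) (k, t')) = Fin.cons k t' from rfl]
    rw [if_congr (condCons k t') rfl rfl]
    simp [hc]

end chain

section main
variable {K : Type*} [Field K] {n : ℕ}

lemma helper (A : Matrix (Fin n) (Fin n) K) (π : Equiv.Perm (Fin n)) (m : ℕ) :
    ∀ k : Fin n,
      chainSum (fun l => Pm K π l * (A - 1)) m ((k : ℕ) + 1) * Pm K π k
        = permPart A π ^ m * Pm K π k := by
  induction m with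
  | zero => intro k; simp [chainSum_zero]
  | succ m ih =>
    intro k
    rw [chainSum_succ, Finset.sum_mul]
    have step : ∀ l : Fin n,
        (if (k : ℕ) + 1 ≤ (l : ℕ) then
            chainSum (fun l => Pm K π l * (A - 1)) m ((l : ℕ)+1) * (Pm K π l * (A-1))
          else 0) * Pm K π k
        = permPart A π ^ m * (if k < l then Pm K π l * (A - 1) * Pm K π k else 0) := by
      intro l
      by_cases h : k < l
      · have h' : (k : ℕ) + 1 ≤ (l : ℕ) := Nat.succ_le_of_lt h
        rw [if_pos h', if_pos h, ← mul_assoc, ← mul_assoc, ih l]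
        noncomm_ring
      · have h' : ¬ ((k : ℕ) + 1 ≤ (l : ℕ)) := fun hh => h (Nat.lt_of_succ_le hh)
        rw [if_neg h', if_neg h, zero_mul, mul_zero]
    rw [Finset.sum_congr rfl fun l _ => step l, ← Finset.mul_sum, key1,
      ← mul_assoc, ← pow_succ]

lemma helper2 (A : Matrix (Fin n) (Fin n) K) (π : Equiv.Perm (Fin n)) (m : ℕ) :
    chainSum (fun l => Pm K π l * (A - 1)) (m + 1) 0 = permPart A π ^ m * (A - 1) := by
  rw [chainSum_succ]
  have step : ∀ k : Fin n,
      (if (0:ℕ) ≤ (k : ℕ) then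
          chainSum (fun l => Pm K π l * (A - 1)) m ((k : ℕ)+1) * (Pm K π k * (A-1))
        else 0)
      = permPart A π ^ m * (Pm K π k * (A - 1)) := by
    intro k
    rw [if_pos (Nat.zero_le _), ← mul_assoc, helper A π m k, mul_assoc]
  rw [Finset.sum_congr rfl fun k _ => step k, ← Finset.mul_sum, ← Finset.sum_mul,
    sum_Pm, one_mul]

end main


/-- **Claims 1 and 2 of Theorem 1.**
With `F̄_i(A) = F_i(A) − I`, for every `1 ≤ m ≤ n` the sum over all strictly decreasing
tuples `n ≥ k_m > ⋯ > k_1 ≥ 1` of the products `F̄_{π_{k_m}}(A) ⋯ F̄_{π_{k_1}}(A)`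
equals `A_π^{m-1} · (A − I)`.  (Strictly decreasing tuples are encoded by strictly
increasing functions `t : Fin m → Fin n` listing `k_1 < ⋯ < k_m`; the product is taken
with the factor of largest index leftmost.) -/
theorem sds_bar_sum_eq_permPart_pow {K : Type*} [Field K] {n : ℕ} (hn : 0 < n)
    (A : Matrix (Fin n) (Fin n) K) (π : Equiv.Perm (Fin n))
    (m : ℕ) (hm₁ : 1 ≤ m) (hm₂ : m ≤ n) :
    (∑ t : Fin m → Fin n,
        if ∀ p q : Fin m, p < q → t p < t q then
          (((List.finRange m).reverse).map fun i => sdsF A (π (t i)) - 1).prod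
        else 0) =
      permPart A π ^ (m - 1) * (A - 1) := by
  obtain ⟨m', rfl⟩ : ∃ m', m = m' + 1 := ⟨m - 1, (Nat.succ_pred_eq_of_pos hm₁).symm⟩
  have : (∑ t : Fin (m'+1) → Fin n,
        if ∀ p q : Fin (m'+1), p < q → t p < t q then
          (((List.finRange (m'+1)).reverse).map fun i => sdsF A (π (t i)) - 1).prod
        else 0) = chainSum (fun l => Pm K π l * (A - 1)) (m' + 1) 0 := by
    rw [chainSum]
    refine Finset.sum_congr rfl fun t _ => ?_
    rw [show (fun i => sdsF A (π (t i)) - 1) = (fun i => Pm K π (t i) * (A - 1)) from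
      funext fun i => sdsF_sub_one A π (t i)]
    exact if_congr (by simp) rfl rfl
  rw [this, helper2]
  simp
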